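/- The (i,j)-shift of a family preserves the property D(s,q): if every s pairwise disjoint members F_1,...,F_s of F ⊆ 2^[n] satisfy |F_1 ∪ ... ∪ F_s| > q, then the same holds for S_{i,j}(F). -/

import Mathlib

/-- The `(i,j)`-shift of a set. -/
def shiftSet {n : ℕ} (i j : Fin n) (A : Finset (Fin n)) : Finset (Fin n) :=
  if i ∈ A ∨ j ∉ A then A else insert i (A.erase j)

/-- The `(i,j)`-shift of a family:
`S_{i,j}(F) = {S_{i,j}(A) : A ∈ F} ∪ {A ∈ F : S_{i,j}(A) ∈ F}`. -/
def shiftFam {n : ℕ} (i j : Fin n) (F : Finset (Finset (Fin n))) :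
    Finset (Finset (Fin n)) :=
  F.image (shiftSet i j) ∪ F.filter fun A => shiftSet i j A ∈ F

/-- The property `D(s,q)`: every `s` pairwise disjoint members have union of size `> q`. -/
def PropD {n : ℕ} (F : Finset (Finset (Fin n))) (s q : ℕ) : Prop :=
  ∀ 𝒜 : Finset (Finset (Fin n)), 𝒜 ⊆ F → 𝒜.card = s →
    (𝒜 : Set (Finset (Fin n))).Pairwise Disjoint → q < (𝒜.biUnion id).card

section aux
variable {n : ℕ} {i j : Fin n} {F : Finset (Finset (Fin n))} {G : Finset (Fin n)}

lemma shiftSet_eq_or (A : Finset (Fin n)) :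
    shiftSet i j A = A ∨ (i ∉ A ∧ j ∈ A ∧ shiftSet i j A = insert i (A.erase j)) := by
  unfold shiftSet
  by_cases h : i ∈ A ∨ j ∉ A
  · simp [h]
  · push_neg at h
    exact Or.inr ⟨h.1, h.2, by simp [h.1, h.2]⟩

lemma shiftSet_of_cond {A : Finset (Fin n)} (h1 : i ∉ A) (h2 : j ∈ A) :
    shiftSet i j A = insert i (A.erase j) := by
  unfold shiftSet; simp [h1, h2]

lemma mem_shiftFam :
    G ∈ shiftFam i j F ↔ (∃ A ∈ F, shiftSet i j A = G) ∨ (G ∈ F ∧ shiftSet i j G ∈ F) := by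
  simp [shiftFam, Finset.mem_union, Finset.mem_image, Finset.mem_filter]

lemma mem_of_not_mem_i (hG : G ∈ shiftFam i j F) (hiG : i ∉ G) : G ∈ F := by
  rcases mem_shiftFam.mp hG with ⟨B, hB, hBG⟩ | ⟨h1, _⟩
  · rcases shiftSet_eq_or (i := i) (j := j) B with h | ⟨_, _, h⟩
    · rw [h] at hBG; exact hBG ▸ hB
    · rw [h] at hBG; exact absurd (hBG ▸ Finset.mem_insert_self i _) hiG
  · exact h1

lemma mem_j (hij : i ≠ j) (hG : G ∈ shiftFam i j F) (hiG : i ∉ G) (hjG : j ∈ G) :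
    G ∈ F ∧ shiftSet i j G ∈ F := by
  rcases mem_shiftFam.mp hG with ⟨B, hB, hBG⟩ | h
  · exfalso
    rcases shiftSet_eq_or (i := i) (j := j) B with h | ⟨_, _, h⟩
    · rw [h] at hBG; subst hBG
      have := shiftSet_of_cond hiG hjG
      rw [h] at this
      exact hiG (this ▸ Finset.mem_insert_self i _)
    · rw [h] at hBG; exact hiG (hBG ▸ Finset.mem_insert_self i _)
  · exact h

lemma not_mem_F (hij : i ≠ j) (hG : G ∈ shiftFam i j F) (hGF : G ∉ F) :
    ∃ A ∈ F, i ∉ A ∧ j ∈ A ∧ G = insert i (A.erase j) := by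
  rcases mem_shiftFam.mp hG with ⟨B, hB, hBG⟩ | ⟨h1, _⟩
  · rcases shiftSet_eq_or (i := i) (j := j) B with h | ⟨h1, h2, h⟩
    · rw [h] at hBG; exact absurd (hBG ▸ hB) hGF
    · exact ⟨B, hB, h1, h2, by rw [← hBG, h]⟩
  · exact absurd h1 hGF

end aux

theorem stmt6 (n s q : ℕ) (i j : Fin n) (hij : i < j)
    (F : Finset (Finset (Fin n))) (hF : PropD F s q) :
    PropD (shiftFam i j F) s q := by
  have hij' : i ≠ j := ne_of_lt hij
  intro 𝒜 h𝒜F h𝒜card h𝒜disj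
  by_cases hsub : ∀ G ∈ 𝒜, G ∈ F
  · exact hF 𝒜 hsub h𝒜card h𝒜disj
  push_neg at hsub
  obtain ⟨G, hG𝒜, hGF⟩ := hsub
  obtain ⟨A, hAF, hiA, hjA, hGA⟩ := not_mem_F hij' (h𝒜F hG𝒜) hGF
  have hiG : i ∈ G := hGA ▸ Finset.mem_insert_self i _
  have hjG : j ∉ G := by
    rw [hGA]
    simp [Finset.mem_insert, Finset.mem_erase, Ne.symm hij']
  have hA : A = insert j (G.erase i) := by
    rw [hGA, Finset.erase_insert (by simp [Finset.mem_erase, hiA]),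
      Finset.insert_erase hjA]
  have hdisjG : ∀ H ∈ 𝒜, H ≠ G → i ∉ H := by
    intro H hH hne hiH
    exact (Finset.disjoint_left.mp (h𝒜disj hH hG𝒜 hne) hiH) hiG
  by_cases hj : ∃ H ∈ 𝒜, j ∈ H
  · -- Case 2b: some member H contains j; swap j for i in H as well.
    obtain ⟨H, hH𝒜, hjH⟩ := hj
    have hHG : H ≠ G := fun h => hjG (h ▸ hjH)
    have hiH : i ∉ H := hdisjG H hH𝒜 hHG
    obtain ⟨hHF, hH'F⟩ := mem_j hij' (h𝒜F hH𝒜) hiH hjH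
    rw [shiftSet_of_cond hiH hjH] at hH'F
    set H' := insert i (H.erase j) with hH'
    set 𝒜'' := (𝒜.erase G).erase H with h𝒜''
    have hGHd : Disjoint G H := h𝒜disj hG𝒜 hH𝒜 (Ne.symm hHG)
    have hK : ∀ K ∈ 𝒜'', K ∈ 𝒜 ∧ K ≠ G ∧ K ≠ H ∧ i ∉ K ∧ j ∉ K := by
      intro K hKmem
      have h1 : K ≠ H := (Finset.mem_erase.mp hKmem).1
      have h2 : K ≠ G := (Finset.mem_erase.mp (Finset.mem_erase.mp hKmem).2).1
      have h3 : K ∈ 𝒜 := (Finset.mem_erase.mp (Finset.mem_erase.mp hKmem).2).2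
      refine ⟨h3, h2, h1, hdisjG K h3 h2, fun hjK => ?_⟩
      exact (Finset.disjoint_left.mp (h𝒜disj h3 hH𝒜 h1) hjK) hjH
    set ℬ := insert A (insert H' 𝒜'') with hℬ
    have hjH' : j ∉ H' := by
      simp [hH', Finset.mem_insert, Finset.mem_erase, Ne.symm hij']
    have hiH' : i ∈ H' := Finset.mem_insert_self i _
    have hiA' : i ∉ A := hiA
    have hℬF : ℬ ⊆ F := by
      intro X hX
      rcases Finset.mem_insert.mp hX with rfl | hX
      · exact hAF
      rcases Finset.mem_insert.mp hX with rfl | hX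
      · exact hH'F
      · exact mem_of_not_mem_i (h𝒜F (hK X hX).1) (hK X hX).2.2.2.1
    have hHe : H ∈ 𝒜.erase G := Finset.mem_erase.mpr ⟨hHG, hH𝒜⟩
    have hAnot : A ∉ insert H' 𝒜'' := by
      intro hmem
      rcases Finset.mem_insert.mp hmem with rfl | hmem
      · exact hjH' hjA
      · exact (hK A hmem).2.2.2.2 hjA
    have hH'not : H' ∉ 𝒜'' := fun hm => (hK H' hm).2.2.2.1 hiH'
    have hs2 : 2 ≤ s := by
      have h2 : 1 < 𝒜.card := Finset.one_lt_card.mpr ⟨G, hG𝒜, H, hH𝒜, Ne.symm hHG⟩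
      rw [h𝒜card] at h2; omega
    have hℬcard : ℬ.card = s := by
      rw [hℬ, Finset.card_insert_of_notMem hAnot,
        Finset.card_insert_of_notMem hH'not, h𝒜'',
        Finset.card_erase_of_mem hHe, Finset.card_erase_of_mem hG𝒜, h𝒜card]
      omega
    -- disjointness helpers
    have hdAH' : Disjoint A H' := by
      rw [hA, hH', Finset.disjoint_left]
      intro x hx hx'
      rcases Finset.mem_insert.mp hx with rfl | hx
      · rcases Finset.mem_insert.mp hx' with h | h
        · exact hij' h.symm
        · exact (Finset.mem_erase.mp h).1 rfl
      · rcases Finset.mem_insert.mp hx' with h | h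
        · exact (Finset.mem_erase.mp hx).1 h
        · exact (Finset.disjoint_left.mp hGHd (Finset.mem_erase.mp hx).2)
            (Finset.mem_erase.mp h).2
    have hdAK : ∀ K ∈ 𝒜'', Disjoint A K := by
      intro K hKm
      rw [hA, Finset.disjoint_left]
      intro x hx hxK
      rcases Finset.mem_insert.mp hx with rfl | hx
      · exact (hK K hKm).2.2.2.2 hxK
      · exact (Finset.disjoint_left.mp
          (h𝒜disj hG𝒜 (hK K hKm).1 (Ne.symm (hK K hKm).2.1))
          (Finset.mem_erase.mp hx).2) hxK
    have hdH'K : ∀ K ∈ 𝒜'', Disjoint H' K := by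
      intro K hKm
      rw [hH', Finset.disjoint_left]
      intro x hx hxK
      rcases Finset.mem_insert.mp hx with rfl | hx
      · exact (hK K hKm).2.2.2.1 hxK
      · exact (Finset.disjoint_left.mp
          (h𝒜disj hH𝒜 (hK K hKm).1 (Ne.symm (hK K hKm).2.2.1))
          (Finset.mem_erase.mp hx).2) hxK
    have hℬdisj : (ℬ : Set (Finset (Fin n))).Pairwise Disjoint := by
      intro X hX Y hY hXY
      simp only [hℬ, Finset.coe_insert, Set.mem_insert_iff, Finset.mem_coe] at hX hY
      rcases hX with rfl | rfl | hX <;> rcases hY with rfl | rfl | hY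
      · exact absurd rfl hXY
      · exact hdAH'
      · exact hdAK Y hY
      · exact hdAH'.symm
      · exact absurd rfl hXY
      · exact hdH'K Y hY
      · exact (hdAK X hX).symm
      · exact (hdH'K X hX).symm
      · exact h𝒜disj (hK X hX).1 (hK Y hY).1 hXY
    have h𝒜eq : 𝒜 = insert G (insert H 𝒜'') := by
      rw [h𝒜'', Finset.insert_erase hHe, Finset.insert_erase hG𝒜]
    have hunion : ℬ.biUnion id = 𝒜.biUnion id := by
      conv_rhs => rw [h𝒜eq]
      rw [hℬ]
      simp only [Finset.biUnion_insert, id]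
      rw [← Finset.union_assoc, ← Finset.union_assoc]
      congr 1
      rw [hA, hH']
      ext x
      simp only [Finset.mem_union, Finset.mem_insert, Finset.mem_erase]
      constructor
      · rintro ((rfl | ⟨_, h⟩) | (rfl | ⟨_, h⟩))
        · exact Or.inr hjH
        · exact Or.inl h
        · exact Or.inl hiG
        · exact Or.inr h
      · rintro (h | h)
        · by_cases hx : x = i
          · exact Or.inr (Or.inl hx)
          · exact Or.inl (Or.inr ⟨hx, h⟩)
        · by_cases hx : x = j
          · exact Or.inl (Or.inl hx)
          · exact Or.inr (Or.inr ⟨hx, h⟩)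
    have := hF ℬ hℬF hℬcard hℬdisj
    rwa [hunion] at this
  · -- Case 2a: no member contains j; replace G by A.
    push_neg at hj
    set 𝒜' := 𝒜.erase G with h𝒜'
    have hK : ∀ K ∈ 𝒜', K ∈ 𝒜 ∧ K ≠ G ∧ i ∉ K := by
      intro K hKm
      exact ⟨(Finset.mem_erase.mp hKm).2, (Finset.mem_erase.mp hKm).1,
        hdisjG K (Finset.mem_erase.mp hKm).2 (Finset.mem_erase.mp hKm).1⟩
    set ℬ := insert A 𝒜' with hℬ
    have hAnot : A ∉ 𝒜' := fun hm => hj A (hK A hm).1 hjA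
    have hℬF : ℬ ⊆ F := by
      intro X hX
      rcases Finset.mem_insert.mp hX with rfl | hX
      · exact hAF
      · exact mem_of_not_mem_i (h𝒜F (hK X hX).1) (hK X hX).2.2
    have hs1 : 1 ≤ s := by
      have h1 : 0 < 𝒜.card := Finset.card_pos.mpr ⟨G, hG𝒜⟩
      rw [h𝒜card] at h1; omega
    have hℬcard : ℬ.card = s := by
      rw [hℬ, Finset.card_insert_of_notMem hAnot, h𝒜',
        Finset.card_erase_of_mem hG𝒜, h𝒜card]
      omega
    have hdAK : ∀ K ∈ 𝒜', Disjoint A K := by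
      intro K hKm
      rw [hA, Finset.disjoint_left]
      intro x hx hxK
      rcases Finset.mem_insert.mp hx with rfl | hx
      · exact hj K (hK K hKm).1 hxK
      · exact (Finset.disjoint_left.mp
          (h𝒜disj hG𝒜 (hK K hKm).1 (Ne.symm (hK K hKm).2.1))
          (Finset.mem_erase.mp hx).2) hxK
    have hℬdisj : (ℬ : Set (Finset (Fin n))).Pairwise Disjoint := by
      intro X hX Y hY hXY
      simp only [hℬ, Finset.coe_insert, Set.mem_insert_iff, Finset.mem_coe] at hX hY
      rcases hX with rfl | hX <;> rcases hY with rfl | hY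
      · exact absurd rfl hXY
      · exact hdAK Y hY
      · exact (hdAK X hX).symm
      · exact h𝒜disj (hK X hX).1 (hK Y hY).1 hXY
    set U' := 𝒜'.biUnion id with hU'
    have hiU : i ∉ U' := by
      rw [hU']
      simp only [Finset.mem_biUnion, id, not_exists]
      exact fun K hKm => (hK K hKm.1).2.2 hKm.2
    have hjU : j ∉ U' := by
      rw [hU']
      simp only [Finset.mem_biUnion, id, not_exists]
      exact fun K hKm => hj K (hK K hKm.1).1 hKm.2
    have h𝒜eq : 𝒜 = insert G 𝒜' := by rw [h𝒜', Finset.insert_erase hG𝒜]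
    have hBU : ℬ.biUnion id = insert j ((G ∪ U').erase i) := by
      rw [hℬ, Finset.biUnion_insert, ← hU']
      show A ∪ U' = _
      rw [hA, Finset.insert_union]
      congr 1
      rw [Finset.erase_union_distrib, Finset.erase_eq_of_notMem hiU]
    have hjnot : j ∉ (G ∪ U').erase i := by
      simp only [Finset.mem_erase, Finset.mem_union]
      rintro ⟨_, h | h⟩
      · exact hjG h
      · exact hjU h
    have hiGU : i ∈ G ∪ U' := Finset.mem_union_left _ hiG
    have hcard1 : (ℬ.biUnion id).card = (G ∪ U').card := by
      rw [hBU, Finset.card_insert_of_notMem hjnot, Finset.card_erase_of_mem hiGU]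
      have : 0 < (G ∪ U').card := Finset.card_pos.mpr ⟨i, hiGU⟩
      omega
    have hcard2 : (𝒜.biUnion id).card = (G ∪ U').card := by
      conv_lhs => rw [h𝒜eq]
      rw [Finset.biUnion_insert]
      simp only [id]
      rfl
    have := hF ℬ hℬF hℬcard hℬdisj
    rw [hcard1] at this
    rwa [hcard2]
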